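/- Let k ≥ 2 be an integer. For every real number θ with 0 ≤ θ < 2√(k−1), there exist an integer t ≥ 4 and a real number c > 0 such that θ is the largest real zero of the polynomial (c−1)·G_{t−4} + G_{t−2} (equivalently, θ is the second largest eigenvalue of the matrix B(k,t,c)). -/

import Mathlib

open Polynomial Matrix

/-- The orthogonal polynomials `F_i` defined by `F_0 = 1`, `F_1 = x`, `F_2 = x^2 - k`,
and `F_i = x F_{i-1} - (k-1) F_{i-2}` for `i ≥ 3`. -/
noncomputable def Fpoly (k : ℝ) : ℕ → Polynomial ℝ
  | 0 => 1
  | 1 => X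
  | 2 => X ^ 2 - C k
  | (n + 3) => X * Fpoly k (n + 2) - C (k - 1) * Fpoly k (n + 1)

/-- `G_i = ∑_{j=0}^{⌊i/2⌋} F_{i-2j}`. -/
noncomputable def Gpoly (k : ℝ) (i : ℕ) : Polynomial ℝ :=
  ∑ j ∈ Finset.range (i / 2 + 1), Fpoly k (i - 2 * j)

set_option maxHeartbeats 1000000

lemma Gsucc (k : ℝ) (n : ℕ) : Gpoly k (n + 2) = Fpoly k (n + 2) + Gpoly k n := by
  unfold Gpoly
  rw [show (n+2)/2 + 1 = (n/2 + 1) + 1 by omega, Finset.sum_range_succ']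
  have : ∀ j ∈ Finset.range (n/2 + 1), Fpoly k (n + 2 - 2 * (j + 1)) = Fpoly k (n - 2*j) := by
    intro j hj
    simp only [Finset.mem_range] at hj
    congr 1
    omega
  rw [Finset.sum_congr rfl this]
  simp [add_comm]

lemma G0 (k : ℝ) : Gpoly k 0 = 1 := by simp [Gpoly, Fpoly]

lemma G1 (k : ℝ) : Gpoly k 1 = X := by simp [Gpoly, Fpoly]

theorem Grec (k : ℝ) : ∀ n, Gpoly k (n+2) = X * Gpoly k (n+1) - C (k-1) * Gpoly k n
  | 0 => by
      simp [Gpoly, Fpoly, Finset.sum_range_succ]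
      try ring
  | 1 => by
      simp [Gpoly, Fpoly, Finset.sum_range_succ]
      try ring
  | (n+2) => by
      have h1 := Gsucc k (n+2)
      have h2 := Gsucc k (n+1)
      have h3 := Gsucc k n
      have ih := Grec k n
      have hF : Fpoly k (n+2+2) = X * Fpoly k (n+3) - C (k-1) * Fpoly k (n+2) := rfl
      have h2' : Fpoly k (n+1+2) = Fpoly k (n+3) := rfl
      linear_combination h1 - X * h2 + hF - X * h2' + ih + C (k-1) * h3

theorem Geval (k q : ℝ) (hq : q^2 = k - 1) (ψ : ℝ) :
    ∀ n : ℕ, (Gpoly k n).eval (2*q*Real.cos ψ) * Real.sin ψ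
      = q^n * Real.sin ((n+1 : ℝ) * ψ)
  | 0 => by simp [G0]
  | 1 => by
      simp [G1]
      rw [show ((1:ℝ)+1)*ψ = 2*ψ by ring, Real.sin_two_mul]
      ring
  | (n+2) => by
      have i1 := Geval k q hq ψ (n+1)
      have i2 := Geval k q hq ψ n
      rw [Grec]
      simp only [eval_sub, eval_mul, eval_X, eval_C]
      have hs : Real.sin (((n:ℝ)+2+1) * ψ) + Real.sin (((n:ℝ)+1) * ψ)
          = 2 * Real.cos ψ * Real.sin (((n:ℝ)+1+1) * ψ) := by
        have e1 : ((n:ℝ)+2+1) * ψ = ((n:ℝ)+1+1) * ψ + ψ := by ring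
        have e2 : ((n:ℝ)+1) * ψ = ((n:ℝ)+1+1) * ψ - ψ := by ring
        rw [e1, e2, Real.sin_add, Real.sin_sub]
        ring
      push_cast
      push_cast at i1 i2
      linear_combination (2*q*Real.cos ψ) * i1 - (k-1) * i2 - q^(n+2) * hs
        + (q^n * Real.sin (((n:ℝ)+1)*ψ)) * hq

theorem Gpos (k q x : ℝ) (hq : q^2 = k - 1) (hq1 : 1 ≤ q) (hx : 2*q ≤ x) :
    ∀ n : ℕ, q^n ≤ (Gpoly k n).eval x ∧ q * (Gpoly k n).eval x ≤ (Gpoly k (n+1)).eval x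
  | 0 => by
      simp [G0, G1]
      nlinarith
  | (n+1) => by
      obtain ⟨ha, hb⟩ := Gpos k q x hq hq1 hx n
      have hq0 : 0 < q := by linarith
      have key : q^(n+1) ≤ (Gpoly k (n+1)).eval x := by
        have := mul_le_mul_of_nonneg_left ha hq0.le
        rw [pow_succ]
        nlinarith
      refine ⟨key, ?_⟩
      rw [Grec]
      simp only [eval_sub, eval_mul, eval_X, eval_C]
      have hE1 : 0 ≤ (Gpoly k (n+1)).eval x := le_trans (by positivity) key
      have h3 := mul_le_mul_of_nonneg_right hx hE1
      have h4 := mul_le_mul_of_nonneg_left hb hq0.le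
      nlinarith

theorem sin_nat_abs (α : ℝ) : ∀ n : ℕ, |Real.sin (n * α)| ≤ n * |Real.sin α|
  | 0 => by simp
  | (n+1) => by
      have ih := sin_nat_abs α n
      have h : ((n:ℝ)+1) * α = n*α + α := by ring
      push_cast
      rw [h, Real.sin_add]
      calc |Real.sin (n*α) * Real.cos α + Real.cos (n*α) * Real.sin α|
          ≤ |Real.sin (n*α) * Real.cos α| + |Real.cos (n*α) * Real.sin α| := abs_add_le _ _
        _ ≤ |Real.sin (n*α)| * 1 + 1 * |Real.sin α| := by
            rw [abs_mul, abs_mul]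
            gcongr <;> [exact Real.abs_cos_le_one α; exact Real.abs_cos_le_one _]
        _ ≤ (n:ℝ) * |Real.sin α| + 1 * |Real.sin α| := by nlinarith
        _ = ((n:ℝ)+1) * |Real.sin α| := by ring

theorem sin_nat_strict (α : ℝ) (h0 : 0 < α) (hπ : α < Real.pi) (n : ℕ) (hn : 2 ≤ n) :
    Real.sin (n * α) < n * Real.sin α := by
  obtain ⟨m, rfl⟩ : ∃ m, n = m + 1 := ⟨n-1, by omega⟩
  have hm : 1 ≤ m := by omega
  have hsα : 0 < Real.sin α := Real.sin_pos_of_pos_of_lt_pi h0 hπ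
  have habs := sin_nat_abs α m
  have hcos : |Real.cos α| < 1 := by
    have := Real.sin_sq_add_cos_sq α
    have h1 : Real.cos α ^ 2 < 1 := by nlinarith
    nlinarith [abs_nonneg (Real.cos α), sq_abs (Real.cos α)]
  have expand : Real.sin ((↑(m+1):ℝ) * α)
      = Real.sin (m*α) * Real.cos α + Real.cos (m*α) * Real.sin α := by
    push_cast
    rw [show ((m:ℝ)+1) * α = m*α + α by ring, Real.sin_add]
  push_cast
  push_cast at expand
  rw [expand]
  have h1 : Real.sin (m*α) * Real.cos α ≤ |Real.sin (m*α)| * |Real.cos α| := by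
    rw [← abs_mul]; exact le_abs_self _
  have h2 : Real.cos (m*α) * Real.sin α ≤ Real.sin α := by
    nlinarith [Real.cos_le_one (m*α)]
  have h3 : |Real.sin (m*α)| * |Real.cos α| < m * Real.sin α := by
    rcases eq_or_lt_of_le (abs_nonneg (Real.sin (m*α))) with h|h
    · rw [← h]; simp; positivity
    · calc |Real.sin (m*α)| * |Real.cos α| < |Real.sin (m*α)| * 1 :=
            mul_lt_mul_of_pos_left hcos h
        _ = |Real.sin (m*α)| := mul_one _
        _ ≤ m * |Real.sin α| := habs
        _ = m * Real.sin α := by rw [abs_of_pos hsα]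
  nlinarith

theorem numer_id (m : ℕ) (x : ℝ) :
    Real.cos (((m:ℝ)+2)*x) * ((m:ℝ)+2) * Real.sin ((m:ℝ)*x)
      - Real.sin (((m:ℝ)+2)*x) * (Real.cos ((m:ℝ)*x) * m)
    = Real.sin (2*((m:ℝ)+1)*x) - ((m:ℝ)+1) * Real.sin (2*x) := by
  have e1 : ((m:ℝ)+2)*x = (m:ℝ)*x + 2*x := by ring
  have e2 : 2*((m:ℝ)+1)*x = (m:ℝ)*x + ((m:ℝ)*x + 2*x) := by ring
  rw [e1, e2]
  simp only [Real.sin_add, Real.cos_add]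
  have h1 := Real.sin_sq_add_cos_sq ((m:ℝ)*x)
  linear_combination (-Real.sin (2*x) * ((m:ℝ)+1)) * h1

theorem ratio_anti (m : ℕ) (hm : 1 ≤ m) (a b : ℝ) (ha : 0 < a) (hab : a < b)
    (hb2 : b ≤ Real.pi/2) (hmb : (m:ℝ)*b < Real.pi) :
    Real.sin (((m:ℝ)+2)*b) / Real.sin ((m:ℝ)*b) < Real.sin (((m:ℝ)+2)*a) / Real.sin ((m:ℝ)*a) := by
  set g : ℝ → ℝ := fun x => Real.sin (((m:ℝ)+2)*x) / Real.sin ((m:ℝ)*x) with hg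
  have hm0 : (0:ℝ) < m := by exact_mod_cast hm
  have hsin : ∀ x ∈ Set.Icc a b, 0 < Real.sin ((m:ℝ)*x) := by
    intro x hx
    apply Real.sin_pos_of_pos_of_lt_pi
    · have := hx.1; nlinarith
    · have := hx.2; nlinarith
  have hcont : ContinuousOn g (Set.Icc a b) := by
    apply ContinuousOn.div
    · exact (Real.continuous_sin.comp (continuous_const.mul continuous_id)).continuousOn
    · exact (Real.continuous_sin.comp (continuous_const.mul continuous_id)).continuousOn
    · intro x hx; exact (hsin x hx).ne'
  have hderiv : ∀ x ∈ interior (Set.Icc a b), deriv g x < 0 := by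
    intro x hx
    rw [interior_Icc] at hx
    have hxI : x ∈ Set.Icc a b := Set.mem_Icc.mpr ⟨hx.1.le, hx.2.le⟩
    have hne : Real.sin ((m:ℝ)*x) ≠ 0 := (hsin x hxI).ne'
    have h1 : HasDerivAt (fun y => Real.sin (((m:ℝ)+2)*y)) (Real.cos (((m:ℝ)+2)*x) * ((m:ℝ)+2)) x := by
      simpa [Function.comp_def] using (Real.hasDerivAt_sin (((m:ℝ)+2)*x)).comp x ((hasDerivAt_id x).const_mul ((m:ℝ)+2))
    have h2 : HasDerivAt (fun y => Real.sin ((m:ℝ)*y)) (Real.cos ((m:ℝ)*x) * (m:ℝ)) x := by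
      simpa [Function.comp_def] using (Real.hasDerivAt_sin ((m:ℝ)*x)).comp x ((hasDerivAt_id x).const_mul (m:ℝ))
    have hdiv := h1.div h2 hne
    rw [show g = ((fun y => Real.sin (((m:ℝ)+2)*y)) / fun y => Real.sin ((m:ℝ)*y)) from rfl, hdiv.deriv]
    apply div_neg_of_neg_of_pos
    · rw [numer_id]
      have h2x : 0 < 2*x := by linarith [hx.1, ha]
      have h2xπ : 2*x < Real.pi := by nlinarith [hx.2, hb2]
      have := sin_nat_strict (2*x) h2x h2xπ (m+1) (by omega)
      push_cast at this
      calc Real.sin (2*((m:ℝ)+1)*x) - ((m:ℝ)+1) * Real.sin (2*x)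
          = Real.sin (((m:ℝ)+1)*(2*x)) - ((m:ℝ)+1) * Real.sin (2*x) := by ring_nf
        _ < 0 := by linarith
    · positivity
  have hanti : StrictAntiOn g (Set.Icc a b) :=
    strictAntiOn_of_deriv_neg (convex_Icc a b) hcont hderiv
  exact hanti (Set.left_mem_Icc.mpr hab.le) (Set.right_mem_Icc.mpr hab.le) hab

/-- For every `θ ∈ [0, 2√(k-1))` there are `t ≥ 4` and `c > 0` such that `θ` is the
largest real zero of `(c-1) G_{t-4} + G_{t-2}` (the second largest eigenvalue of `B(k,t,c)`). -/
theorem stmt6 (k : ℕ) (hk : 2 ≤ k) (θ : ℝ) (hθ0 : 0 ≤ θ)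
    (hθ : θ < 2 * Real.sqrt ((k : ℝ) - 1)) :
    ∃ (t : ℕ) (c : ℝ), 4 ≤ t ∧ 0 < c ∧
      IsGreatest
        {x : ℝ | (c - 1) * (Gpoly (k : ℝ) (t - 4)).eval x + (Gpoly (k : ℝ) (t - 2)).eval x = 0}
        θ := by
  have hk' : (2:ℝ) ≤ (k:ℝ) := by exact_mod_cast hk
  set q : ℝ := Real.sqrt ((k:ℝ) - 1) with hqdef
  have hq2 : q^2 = (k:ℝ) - 1 := Real.sq_sqrt (by linarith)
  have hq0 : 0 ≤ q := Real.sqrt_nonneg _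
  have hq1 : 1 ≤ q := by
    rw [show (1:ℝ) = Real.sqrt 1 by simp, hqdef]
    exact Real.sqrt_le_sqrt (by linarith)
  have hqpos : 0 < q := by linarith
  have hπ := Real.pi_pos
  -- the angle φ
  set φ : ℝ := Real.arccos (θ / (2*q)) with hφdef
  have hfrac0 : 0 ≤ θ / (2*q) := by positivity
  have hfrac1 : θ / (2*q) < 1 := by
    rw [div_lt_one (by linarith)]
    linarith
  have hφpos : 0 < φ := Real.arccos_pos.mpr hfrac1
  have hφhalf : φ ≤ Real.pi / 2 := Real.arccos_le_pi_div_two.mpr hfrac0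
  have hcosφ : Real.cos φ = θ / (2*q) := Real.cos_arccos (by linarith) hfrac1.le
  have hθeq : θ = 2*q*Real.cos φ := by
    rw [hcosφ]; field_simp
  -- the integer m
  set r : ℝ := Real.pi / φ with hrdef
  have hr2 : (2:ℝ) ≤ r := by
    rw [hrdef, le_div_iff₀ hφpos]
    linarith
  have hceil2 : 2 ≤ ⌈r⌉₊ := by
    have : (1:ℕ) < ⌈r⌉₊ := by
      rw [Nat.lt_ceil]; push_cast; linarith
    omega
  set m : ℕ := ⌈r⌉₊ - 1 with hmdef
  have hm1 : 1 ≤ m := by omega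
  have hmcast : (m:ℝ) = (⌈r⌉₊ : ℝ) - 1 := by
    rw [hmdef]; push_cast [Nat.cast_sub (by omega : 1 ≤ ⌈r⌉₊)]; ring
  have hmlt : (m:ℝ) < r := by
    have := Nat.ceil_lt_add_one (by positivity : (0:ℝ) ≤ r)
    rw [hmcast]; linarith
  have hmge : r ≤ (m:ℝ) + 1 := by
    have h1 : (⌈r⌉₊:ℝ) = (m:ℝ) + 1 := by rw [hmcast]; ring
    have := Nat.le_ceil r
    linarith
  have hrφ : r * φ = Real.pi := div_mul_cancel₀ _ hφpos.ne'
  have hm0' : (0:ℝ) < m := by exact_mod_cast hm1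
  have hmφ : (m:ℝ)*φ < Real.pi := by
    have := mul_lt_mul_of_pos_right hmlt hφpos
    rw [hrφ] at this
    exact this
  have hmφpos : 0 < (m:ℝ)*φ := mul_pos hm0' hφpos
  have hm2φ : Real.pi < ((m:ℝ)+2)*φ := by
    have := mul_le_mul_of_nonneg_right hmge hφpos.le
    rw [hrφ] at this
    nlinarith [hφpos]
  have hm2φ2 : ((m:ℝ)+2)*φ < 2*Real.pi := by
    have h2φ : 2*φ ≤ Real.pi := by linarith
    nlinarith [hmφ]
  have hS1 : 0 < Real.sin ((m:ℝ)*φ) := Real.sin_pos_of_pos_of_lt_pi hmφpos hmφ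
  have hS3 : Real.sin (((m:ℝ)+2)*φ) ≤ 0 := by
    have h1 : Real.sin ((((m:ℝ)+2)*φ) - Real.pi) = -Real.sin (((m:ℝ)+2)*φ) :=
      Real.sin_sub_pi _
    have h2 : 0 ≤ Real.sin ((((m:ℝ)+2)*φ) - Real.pi) := by
      apply Real.sin_nonneg_of_nonneg_of_le_pi <;> linarith
    linarith
  -- choice of c and t
  set c : ℝ := 1 - q^2 * (Real.sin (((m:ℝ)+2)*φ) / Real.sin ((m:ℝ)*φ)) with hcdef
  have hc1 : 1 ≤ c := by
    have h1 : Real.sin (((m:ℝ)+2)*φ) / Real.sin ((m:ℝ)*φ) ≤ 0 :=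
      div_nonpos_of_nonpos_of_nonneg hS3 hS1.le
    have h2 : q^2 * (Real.sin (((m:ℝ)+2)*φ) / Real.sin ((m:ℝ)*φ)) ≤ 0 :=
      mul_nonpos_of_nonneg_of_nonpos (by positivity) h1
    rw [hcdef]
    linarith
  obtain ⟨n, hnm⟩ : ∃ n, m = n + 1 := ⟨m - 1, by omega⟩
  have hR : (m:ℝ) = (n:ℝ) + 1 := by rw [hnm]; push_cast; ring
  have hsinφ : 0 < Real.sin φ := Real.sin_pos_of_pos_of_lt_pi hφpos (by linarith)
  have hkey : (c - 1) * Real.sin ((m:ℝ)*φ) + q^2 * Real.sin (((m:ℝ)+2)*φ) = 0 := by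
    rw [hcdef]
    field_simp
    ring
  refine ⟨m + 3, c, by omega, by linarith, ?_, ?_⟩
  · -- membership
    show (c - 1) * (Gpoly (k:ℝ) (m+3-4)).eval θ + (Gpoly (k:ℝ) (m+3-2)).eval θ = 0
    rw [show m+3-4 = n from by omega, show m+3-2 = n+2 from by omega]
    have e1 := Geval (k:ℝ) q hq2 φ n
    have e2 := Geval (k:ℝ) q hq2 φ (n+2)
    push_cast at e1 e2
    rw [← hθeq] at e1 e2
    have hprod : ((c - 1) * (Gpoly (k:ℝ) n).eval θ + (Gpoly (k:ℝ) (n+2)).eval θ) * Real.sin φ = 0 := by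
      have hA : (m:ℝ)*φ = ((n:ℝ)+1)*φ := by rw [hR]
      have hB : ((m:ℝ)+2)*φ = ((n:ℝ)+2+1)*φ := by rw [hR]; ring
      rw [hA, hB] at hkey
      linear_combination (norm := ring_nf) (c-1) * e1 + e2 + q^n * hkey
    rcases mul_eq_zero.mp hprod with h | h
    · exact h
    · exact absurd h hsinφ.ne'
  · -- upper bound
    intro x hx
    simp only [Set.mem_setOf_eq] at hx
    rw [show m+3-4 = n from by omega, show m+3-2 = n+2 from by omega] at hx
    by_contra hcon
    push_neg at hcon
    rcases le_or_gt (2*q) x with hbig | hsmall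
    · -- x ≥ 2q : polynomial positive
      obtain ⟨p1, -⟩ := Gpos (k:ℝ) q x hq2 hq1 hbig n
      obtain ⟨p2, -⟩ := Gpos (k:ℝ) q x hq2 hq1 hbig (n+2)
      have hq' : (0:ℝ) < q^(n+2) := by positivity
      have hg0 : (0:ℝ) < q^n := by positivity
      have hEn : 0 ≤ (Gpoly (k:ℝ) n).eval x := le_trans hg0.le p1
      have h5 : 0 ≤ (c-1) * (Gpoly (k:ℝ) n).eval x :=
        mul_nonneg (by linarith) hEn
      linarith [hx, h5, p2, hq']
    · -- θ < x < 2q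
      have hx0 : 0 < x := lt_of_le_of_lt hθ0 hcon
      set ψ : ℝ := Real.arccos (x / (2*q)) with hψdef
      have hxfrac0 : 0 ≤ x / (2*q) := by positivity
      have hxfrac1 : x / (2*q) < 1 := by
        rw [div_lt_one (by linarith)]; linarith
      have hψpos : 0 < ψ := Real.arccos_pos.mpr hxfrac1
      have hcosψ : Real.cos ψ = x / (2*q) := Real.cos_arccos (by linarith) hxfrac1.le
      have hxeq : x = 2*q*Real.cos ψ := by rw [hcosψ]; field_simp
      have hψφ : ψ < φ := by
        have hlt : θ/(2*q) < x/(2*q) :=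
          (div_lt_div_iff_of_pos_right (by linarith : (0:ℝ) < 2*q)).mpr hcon
        exact Real.strictAntiOn_arccos ⟨by linarith, hfrac1.le⟩
          ⟨by linarith, hxfrac1.le⟩ hlt
      have hS1ψ : 0 < Real.sin ((m:ℝ)*ψ) := by
        apply Real.sin_pos_of_pos_of_lt_pi (mul_pos hm0' hψpos)
        have := mul_lt_mul_of_pos_left hψφ hm0'
        linarith
      have hratio := ratio_anti m hm1 ψ φ hψpos hψφ hφhalf hmφ
      have hpos : 0 < (c-1) * Real.sin ((m:ℝ)*ψ) + q^2 * Real.sin (((m:ℝ)+2)*ψ) := by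
        have h1 : (c-1) = -(q^2 * (Real.sin (((m:ℝ)+2)*φ) / Real.sin ((m:ℝ)*φ))) := by
          rw [hcdef]; ring
        have h2 := mul_lt_mul_of_pos_right hratio hS1ψ
        have h3 : Real.sin (((m:ℝ)+2)*ψ) / Real.sin ((m:ℝ)*ψ) * Real.sin ((m:ℝ)*ψ)
            = Real.sin (((m:ℝ)+2)*ψ) := div_mul_cancel₀ _ hS1ψ.ne'
        rw [h3] at h2
        rw [h1]
        have hq2' : (0:ℝ) < q^2 := by positivity
        have h4 := mul_lt_mul_of_pos_left h2 hq2'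
        linarith
      have e1 := Geval (k:ℝ) q hq2 ψ n
      have e2 := Geval (k:ℝ) q hq2 ψ (n+2)
      push_cast at e1 e2
      rw [← hxeq] at e1 e2
      have hval : ((c - 1) * (Gpoly (k:ℝ) n).eval x + (Gpoly (k:ℝ) (n+2)).eval x) * Real.sin ψ
          = q^n * ((c-1) * Real.sin ((m:ℝ)*ψ) + q^2 * Real.sin (((m:ℝ)+2)*ψ)) := by
        have hA : (m:ℝ)*ψ = ((n:ℝ)+1)*ψ := by rw [hR]
        have hB : ((m:ℝ)+2)*ψ = ((n:ℝ)+2+1)*ψ := by rw [hR]; ring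
        rw [hA, hB]
        linear_combination (norm := ring_nf) (c-1) * e1 + e2
      rw [hx, zero_mul] at hval
      have hqn : (0:ℝ) < q^n := by positivity
      have := mul_pos hqn hpos
      linarith
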